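/- Let ρ_a and ρ_b be density matrices on ℂ^d, let H = (1/√2)·[[1,1],[1,−1]] be the Hadamard matrix, let V be the swap operator on ℂ^d ⊗ ℂ^d, and let ctrl-V = (|0⟩⟨0| ⊗ I_{d²}) + (|1⟩⟨1| ⊗ V) be the controlled swap with the control qubit in the first register. Define the estimation network E = (H ⊗ I_{d²}) · ctrl-V · (H ⊗ I_{d²}). Then the probability of observing outcome 0 on the control qubit after applying E to the state |0⟩⟨0| ⊗ ρ_a ⊗ ρ_b, namely trace((|0⟩⟨0| ⊗ I_{d²}) · E · (|0⟩⟨0| ⊗ ρ_a ⊗ ρ_b) · Eᴴ), equals (1 + trace(ρ_a·ρ_b))/2. -/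
import Mathlib


open Matrix
open scoped Kronecker ComplexOrder

/-- A density matrix on `ℂ^d`: positive semidefinite with trace `1`. -/
def IsDensityMatrix {d : ℕ} (ρ : Matrix (Fin d) (Fin d) ℂ) : Prop :=
  ρ.PosSemidef ∧ ρ.trace = 1

/-- The swap operator on `ℂ^d ⊗ ℂ^d`. -/
def swapOp (d : ℕ) : Matrix (Fin d × Fin d) (Fin d × Fin d) ℂ :=
  Matrix.of fun p q => if p.1 = q.2 ∧ p.2 = q.1 then 1 else 0

/-- The Hadamard matrix `(1/√2)·[[1,1],[1,−1]]`. -/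
noncomputable def Had : Matrix (Fin 2) (Fin 2) ℂ :=
  ((1 / Real.sqrt 2 : ℝ) : ℂ) • !![1, 1; 1, -1]

/-- `|0⟩⟨0|`. -/
def ket0bra0 : Matrix (Fin 2) (Fin 2) ℂ := !![1, 0; 0, 0]

/-- `|1⟩⟨1|`. -/
def ket1bra1 : Matrix (Fin 2) (Fin 2) ℂ := !![0, 0; 0, 1]

/-- The controlled-swap `|0⟩⟨0| ⊗ I + |1⟩⟨1| ⊗ V`. -/
noncomputable def ctrlV (d : ℕ) : Matrix (Fin 2 × (Fin d × Fin d)) (Fin 2 × (Fin d × Fin d)) ℂ :=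
  ket0bra0 ⊗ₖ (1 : Matrix (Fin d × Fin d) (Fin d × Fin d) ℂ) + ket1bra1 ⊗ₖ swapOp d

/-- The estimation network `E = (H ⊗ I) · ctrl-V · (H ⊗ I)`. -/
noncomputable def estimationNetwork (d : ℕ) :
    Matrix (Fin 2 × (Fin d × Fin d)) (Fin 2 × (Fin d × Fin d)) ℂ :=
  (Had ⊗ₖ (1 : Matrix (Fin d × Fin d) (Fin d × Fin d) ℂ)) * ctrlV d *
    (Had ⊗ₖ (1 : Matrix (Fin d × Fin d) (Fin d × Fin d) ℂ))

lemma swapOp_conjTranspose (d : ℕ) : (swapOp d)ᴴ = swapOp d := by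
  ext ⟨i, j⟩ ⟨k, l⟩
  simp only [swapOp, conjTranspose_apply, Matrix.of_apply, apply_ite (star : ℂ → ℂ),
    star_one, star_zero]
  simp [and_comm, eq_comm]

lemma swapOp_mul_swapOp (d : ℕ) : swapOp d * swapOp d = 1 := by
  ext ⟨i, j⟩ ⟨k, l⟩
  rw [Matrix.mul_apply, Finset.sum_eq_single ((j, i) : Fin d × Fin d)]
  · by_cases h1 : i = k <;> by_cases h2 : j = l <;>
      simp [swapOp, Matrix.one_apply, Prod.ext_iff, h1, h2]
  · rintro ⟨q1, q2⟩ _ hq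
    simp only [swapOp, Matrix.of_apply]
    rw [if_neg, zero_mul]
    rintro ⟨h1, h2⟩
    exact hq (by simp [Prod.ext_iff, ← h1, ← h2])
  · simp

lemma trace_swapOp_mul {d : ℕ} (A B : Matrix (Fin d) (Fin d) ℂ) :
    (swapOp d * (A ⊗ₖ B)).trace = (A * B).trace := by
  simp only [Matrix.trace, Matrix.diag, Matrix.mul_apply, swapOp, Matrix.of_apply,
    Matrix.kroneckerMap_apply, ite_mul, one_mul, zero_mul, Fintype.sum_prod_type, ite_and]
  simp only [Finset.sum_ite_eq, Finset.sum_ite_eq', Finset.mem_univ, if_true]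
  rw [Finset.sum_comm]

lemma had_sq_scalar : ((1 / Real.sqrt 2 : ℝ) : ℂ) * ((1 / Real.sqrt 2 : ℝ) : ℂ) = 1 / 2 := by
  rw [← Complex.ofReal_mul]
  have : (1 / Real.sqrt 2) * (1 / Real.sqrt 2) = 1 / 2 := by
    rw [div_mul_div_comm, one_mul, Real.mul_self_sqrt (by norm_num : (0:ℝ) ≤ 2)]
  rw [this]
  norm_num

lemma HP0H : Had * ket0bra0 * Had = ((1 / 2 : ℂ)) • !![1, 1; 1, 1] := by
  rw [Had, ket0bra0, smul_mul_assoc, smul_mul_assoc, mul_smul_comm, smul_smul, had_sq_scalar]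
  congr 1
  rw [Matrix.mul_fin_two, Matrix.mul_fin_two]
  norm_num

lemma HP1H : Had * ket1bra1 * Had = ((1 / 2 : ℂ)) • !![1, -1; -1, 1] := by
  rw [Had, ket1bra1, smul_mul_assoc, smul_mul_assoc, mul_smul_comm, smul_smul, had_sq_scalar]
  congr 1
  rw [Matrix.mul_fin_two, Matrix.mul_fin_two]
  norm_num

lemma estimationNetwork_eq (d : ℕ) :
    estimationNetwork d = (1 / 2 : ℂ) •
      ((!![1, 1; 1, 1] ⊗ₖ (1 : Matrix (Fin d × Fin d) (Fin d × Fin d) ℂ)) +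
       (!![1, -1; -1, 1] ⊗ₖ swapOp d)) := by
  rw [estimationNetwork, ctrlV, mul_add, add_mul, ← Matrix.mul_kronecker_mul,
    ← Matrix.mul_kronecker_mul, ← Matrix.mul_kronecker_mul, ← Matrix.mul_kronecker_mul,
    HP0H, HP1H]
  simp only [Matrix.one_mul, Matrix.mul_one, Matrix.smul_kronecker, smul_add]

theorem estimation_network_prob_zero {d : ℕ} (ρa ρb : Matrix (Fin d) (Fin d) ℂ)
    (ha : IsDensityMatrix ρa) (hb : IsDensityMatrix ρb) :
    ((ket0bra0 ⊗ₖ (1 : Matrix (Fin d × Fin d) (Fin d × Fin d) ℂ)) *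
        estimationNetwork d * (ket0bra0 ⊗ₖ (ρa ⊗ₖ ρb)) * (estimationNetwork d)ᴴ).trace =
      (1 + (ρa * ρb).trace) / 2 := by
  have kronCT : ∀ {m n : Type} [Fintype m] [Fintype n] [DecidableEq m] [DecidableEq n]
      (A : Matrix m m ℂ) (B : Matrix n n ℂ), (A ⊗ₖ B)ᴴ = Aᴴ ⊗ₖ Bᴴ := by
    intro m n _ _ _ _ A B
    ext ⟨i, j⟩ ⟨k, l⟩
    simp [conjTranspose_apply, star_mul', mul_comm]
  have hJ : (!![1, 1; 1, 1] : Matrix (Fin 2) (Fin 2) ℂ)ᴴ = !![1, 1; 1, 1] := by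
    ext i j; fin_cases i <;> fin_cases j <;> simp [conjTranspose_apply]
  have hK : (!![1, -1; -1, 1] : Matrix (Fin 2) (Fin 2) ℂ)ᴴ = !![1, -1; -1, 1] := by
    ext i j; fin_cases i <;> fin_cases j <;> simp [conjTranspose_apply]
  have hECT : (estimationNetwork d)ᴴ = estimationNetwork d := by
    rw [estimationNetwork_eq, conjTranspose_smul, conjTranspose_add, kronCT, kronCT,
      hJ, hK, conjTranspose_one, swapOp_conjTranspose]
    norm_num
  rw [hECT, estimationNetwork_eq]
  simp only [Matrix.smul_mul, Matrix.mul_smul, smul_smul, Matrix.mul_add, Matrix.add_mul,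
    ← Matrix.mul_kronecker_mul, Matrix.one_mul, Matrix.mul_one]
  simp only [Matrix.trace_smul, Matrix.trace_add, Matrix.trace_kronecker, smul_smul,
    smul_eq_mul]
  have h2 : ∀ A B : Matrix (Fin 2) (Fin 2) ℂ,
      (ket0bra0 * A * ket0bra0 * B).trace = A 0 0 * B 0 0 := by
    intro A B
    simp [Matrix.trace_fin_two, Matrix.mul_apply, Fin.sum_univ_two, ket0bra0, Matrix.vecMul,
      dotProduct]
  have htr : (ρa ⊗ₖ ρb).trace = 1 := by
    rw [Matrix.trace_kronecker, ha.2, hb.2, one_mul]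
  have htr' : ρa.trace * ρb.trace = 1 := by rw [ha.2, hb.2, one_mul]
  have hVρ : (swapOp d * (ρa ⊗ₖ ρb)).trace = (ρa * ρb).trace := trace_swapOp_mul ρa ρb
  have hρV : ((ρa ⊗ₖ ρb) * swapOp d).trace = (ρa * ρb).trace := by
    rw [Matrix.trace_mul_comm, hVρ]
  have hVρV : (swapOp d * (ρa ⊗ₖ ρb) * swapOp d).trace = 1 := by
    rw [Matrix.trace_mul_cycle, swapOp_mul_swapOp, Matrix.one_mul, htr]
  rw [h2, h2, h2, h2, htr', hρV, hVρV, hVρ]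
  norm_num
  ring
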